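/- arXiv:1211.5023 — 2 statements merged into one kernel-verified Lean document; each statement's English description precedes it below -/
import Mathlib

section
/- Let β = (1+√5)/2. For Lebesgue-almost every x ∈ [0, 1/(β−1)], the frequency of the digit 1 in the greedy β-expansion of x, i.e. lim_{n→∞} (1/n)·#{k ≤ n : x_k = 1}, exists and equals 1/(β²+1), where (x_k) is the digit sequence generated by iterating the greedy β-transformation T. -/
open MeasureTheory Filter

/-- The golden mean. -/
noncomputable def goldenMean : ℝ := (1 + Real.sqrt 5) / 2

/-- The greedy β-transformation for the golden mean. -/
noncomputable def greedyT (x : ℝ) : ℝ :=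
  if x < 1 / goldenMean then goldenMean * x else goldenMean * x - 1

/-- The k-th digit (k ≥ 0) of the greedy β-expansion of x: it is 1 iff T^k x ≥ 1/β. -/
noncomputable def greedyDigit (x : ℝ) (k : ℕ) : ℝ :=
  if 1 / goldenMean ≤ greedyT^[k] x then 1 else 0

namespace GM

local notation "φ" => goldenMean

lemma sqrt5_sq : Real.sqrt 5 ^ 2 = 5 := Real.sq_sqrt (by norm_num)
lemma sqrt5_ge : (2:ℝ) ≤ Real.sqrt 5 := by
  nlinarith [sqrt5_sq, Real.sqrt_nonneg 5]
lemma sqrt5_lt : Real.sqrt 5 < 3 := by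
  nlinarith [sqrt5_sq, Real.sqrt_nonneg 5]

lemma phi_ge : (3/2 : ℝ) ≤ φ := by
  unfold goldenMean; nlinarith [sqrt5_ge]
lemma phi_lt2 : φ < 2 := by
  unfold goldenMean; nlinarith [sqrt5_lt]
lemma phi_pos : (0:ℝ) < φ := lt_of_lt_of_le (by norm_num) phi_ge
lemma one_lt_phi : (1:ℝ) < φ := lt_of_lt_of_le (by norm_num) phi_ge
lemma phi_ne : φ ≠ 0 := ne_of_gt phi_pos
lemma phi_sq : φ ^ 2 = φ + 1 := by
  unfold goldenMean; nlinarith [sqrt5_sq]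
lemma phi_inv : 1 / φ = φ - 1 := by
  rw [div_eq_iff phi_ne]; nlinarith [phi_sq]
lemma phi_inv_lt_one : 1 / φ < 1 := by
  rw [phi_inv]; linarith [phi_lt2]
lemma phi_inv_pos : 0 < 1 / φ := one_div_pos.mpr phi_pos
lemma sqrt5_phi : Real.sqrt 5 * φ = φ ^ 2 + 1 := by
  unfold goldenMean; nlinarith [sqrt5_sq]

lemma measurable_T : Measurable greedyT := by
  unfold greedyT
  exact Measurable.ite (measurableSet_lt measurable_id measurable_const)
    (measurable_const.mul measurable_id)
    ((measurable_const.mul measurable_id).sub measurable_const)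

lemma measurable_g (k : ℕ) : Measurable fun x => greedyDigit x k := by
  unfold greedyDigit
  exact Measurable.ite
    (measurableSet_le measurable_const (measurable_T.iterate k)) measurable_const
    measurable_const

lemma g_nonneg (x : ℝ) (k : ℕ) : 0 ≤ greedyDigit x k := by
  unfold greedyDigit; split <;> norm_num

lemma g_le_one (x : ℝ) (k : ℕ) : greedyDigit x k ≤ 1 := by
  unfold greedyDigit; split <;> norm_num

lemma g_abs (x : ℝ) (k : ℕ) : |greedyDigit x k| ≤ 1 := by
  rw [abs_le]; exact ⟨by linarith [g_nonneg x k], g_le_one x k⟩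

lemma g_sq (x : ℝ) (k : ℕ) : greedyDigit x k * greedyDigit x k = greedyDigit x k := by
  unfold greedyDigit; split <;> norm_num

lemma g_succ (x : ℝ) (k : ℕ) : greedyDigit x (k+1) = greedyDigit (greedyT x) k := by
  unfold greedyDigit; rw [Function.iterate_succ_apply]

lemma iI (f : ℝ → ℝ) (a b : ℝ) :
    ∫ x in Set.Ico a b, f x = ∫ x in Set.Ioc a b, f x := by
  rw [← integral_Icc_eq_integral_Ico, integral_Icc_eq_integral_Ioc]

lemma intble {f : ℝ → ℝ} (hf : Measurable f) (hb : ∀ y, |f y| ≤ 1) (a b : ℝ) :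
    IntegrableOn f (Set.Ico a b) volume := by
  refine Integrable.mono' (g := fun _ => (1:ℝ)) ?_ hf.aestronglyMeasurable ?_
  · exact integrableOn_const measure_Ico_lt_top.ne
  · exact Filter.Eventually.of_forall hb

lemma split01 {f : ℝ → ℝ} (hf : Measurable f) (hb : ∀ y, |f y| ≤ 1) :
    ∫ x in Set.Ico (0:ℝ) 1, f x
      = (∫ x in Set.Ico (0:ℝ) (1/φ), f x) + ∫ x in Set.Ico (1/φ) (1:ℝ), f x := by
  rw [← setIntegral_union (Set.disjoint_left.mpr fun x hx hx' => absurd hx.2 (not_lt.mpr hx'.1)) measurableSet_Ico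
      (intble hf hb _ _) (intble hf hb _ _),
    Set.Ico_union_Ico_eq_Ico phi_inv_pos.le phi_inv_lt_one.le]

lemma cov_a {f : ℝ → ℝ} (hf : Measurable f) (hb : ∀ y, |f y| ≤ 1) :
    ∫ x in Set.Ico (0:ℝ) (1/φ), f (greedyT x) = φ⁻¹ * ∫ y in Set.Ico (0:ℝ) 1, f y := by
  have h1 : ∫ x in Set.Ico (0:ℝ) (1/φ), f (greedyT x)
      = ∫ x in Set.Ico (0:ℝ) (1/φ), f (φ * x) := by
    refine setIntegral_congr_fun measurableSet_Ico fun x hx => ?_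
    unfold greedyT; rw [if_pos hx.2]
  have h2 : ∫ x in Set.Ico (0:ℝ) (1/φ), f (φ * x)
      = ∫ x in (0:ℝ)..(1/φ), f (φ * x) := by
    rw [intervalIntegral.integral_of_le phi_inv_pos.le, iI]
  rw [h1, h2, intervalIntegral.integral_comp_mul_left f phi_ne, mul_zero,
    mul_one_div, div_self phi_ne, intervalIntegral.integral_of_le (by norm_num : (0:ℝ) ≤ 1),
    ← iI, smul_eq_mul]

lemma cov_b {f : ℝ → ℝ} (hf : Measurable f) (hb : ∀ y, |f y| ≤ 1) :
    ∫ x in Set.Ico (1/φ) (1:ℝ), f (greedyT x) = φ⁻¹ * ∫ y in Set.Ico (0:ℝ) (1/φ), f y := by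
  have h1 : ∫ x in Set.Ico (1/φ) (1:ℝ), f (greedyT x)
      = ∫ x in Set.Ico (1/φ) (1:ℝ), f (φ * x - 1) := by
    refine setIntegral_congr_fun measurableSet_Ico fun x hx => ?_
    unfold greedyT; rw [if_neg (not_lt.mpr hx.1)]
  have h2 : ∫ x in Set.Ico (1/φ) (1:ℝ), f (φ * x - 1)
      = ∫ x in (1/φ)..(1:ℝ), f (φ * x - 1) := by
    rw [intervalIntegral.integral_of_le phi_inv_lt_one.le, iI]
  have h3 : φ * (1/φ) - 1 = 0 := by rw [mul_one_div, div_self phi_ne, sub_self]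
  have h4 : φ * 1 - 1 = 1/φ := by rw [phi_inv]; ring
  rw [h1, h2, intervalIntegral.integral_comp_mul_sub f phi_ne 1, h3, h4,
    intervalIntegral.integral_of_le phi_inv_pos.le, ← iI, smul_eq_mul]

lemma cov_c {f : ℝ → ℝ} (hf : Measurable f) (hb : ∀ y, |f y| ≤ 1) :
    ∫ x in Set.Ico (0:ℝ) 1, f (greedyT x)
      = φ⁻¹ * (∫ y in Set.Ico (0:ℝ) 1, f y) + φ⁻¹ * ∫ y in Set.Ico (0:ℝ) (1/φ), f y := by
  have := split01 (f := fun x => f (greedyT x)) (hf.comp measurable_T) (fun y => hb _)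
  rw [this, cov_a hf hb, cov_b hf hb]

noncomputable def qq : ℝ := goldenMean - 2
noncomputable def pp : ℝ := 1 / (goldenMean ^ 2 + 1)

lemma pp_eq : pp = (3 - φ) / 5 := by
  unfold pp
  have h1 : φ ^ 2 + 1 ≠ 0 := by positivity
  rw [div_eq_div_iff h1 (by norm_num)]
  linear_combination (φ - 2) * phi_sq

lemma qq_abs : |qq| ≤ 1/2 := by
  unfold qq; rw [abs_le]; constructor <;> nlinarith [phi_ge, phi_lt2]

lemma pp_pos : 0 < pp := by
  unfold pp; positivity

lemma pp_le_one : pp ≤ 1 := by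
  rw [pp_eq]; nlinarith [phi_ge]

lemma alg_A2 : pp * (1 - qq) = 2 - φ := by
  rw [pp_eq]; unfold qq; linear_combination (1/5 : ℝ) * phi_sq

lemma alg_hc : pp * (1 - qq) = (φ - 1) * (φ - 1) := by
  rw [pp_eq]; unfold qq; linear_combination (-4/5 : ℝ) * phi_sq

lemma alg_B1 (t u : ℝ) :
    pp * (1 - (t * qq) * qq) * u
      = (φ - 1) * (pp * (1 - t * qq) * u) + (φ - 1) * ((pp * (1 - t) * (φ - 1)) * u) := by
  rw [pp_eq]; unfold qq
  linear_combination ((-(φ*t) + φ + 3*t - 3)/5 * u) * phi_sq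

lemma phi_inv_eq : (goldenMean)⁻¹ = φ - 1 := by
  rw [← one_div, phi_inv]

lemma vol01 : (volume (Set.Ico (0:ℝ) 1)).toReal = 1 := by
  rw [Real.volume_Ico]; norm_num

-- digit 0 explicit
lemma g0_eq (x : ℝ) : greedyDigit x 0 = if 1/φ ≤ x then 1 else 0 := rfl

lemma base_u : ∫ x in Set.Ico (0:ℝ) 1, greedyDigit x 0 = 2 - φ := by
  rw [split01 (measurable_g 0) (fun y => g_abs y 0)]
  have h1 : ∫ x in Set.Ico (0:ℝ) (1/φ), greedyDigit x 0 = 0 := by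
    rw [setIntegral_congr_fun (g := fun _ => (0:ℝ)) measurableSet_Ico
      (fun x hx => by rw [g0_eq, if_neg (not_le.mpr hx.2)])]
    simp
  have h2 : ∫ x in Set.Ico (1/φ) (1:ℝ), greedyDigit x 0 = 2 - φ := by
    rw [setIntegral_congr_fun (g := fun _ => (1:ℝ)) measurableSet_Ico
      (fun x hx => by rw [g0_eq, if_pos hx.1])]
    rw [setIntegral_const, smul_eq_mul, mul_one, measureReal_def, Real.volume_Ico,
      ENNReal.toReal_ofReal (by linarith [phi_inv_lt_one] : (0:ℝ) ≤ 1 - 1/φ), phi_inv]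
    ring
  rw [h1, h2]; ring

lemma base_v : ∫ x in Set.Ico (0:ℝ) (1/φ), greedyDigit x 0 = 0 := by
  rw [setIntegral_congr_fun (g := fun _ => (0:ℝ)) measurableSet_Ico
    (fun x hx => by rw [g0_eq, if_neg (not_le.mpr hx.2)])]
  simp

lemma valA (k : ℕ) :
    (∫ x in Set.Ico (0:ℝ) 1, greedyDigit x k) = pp * (1 - qq^(k+1)) ∧
    (∫ x in Set.Ico (0:ℝ) (1/φ), greedyDigit x k) = pp * (1 - qq^k) * (φ - 1) := by
  induction k with
  | zero =>
    constructor
    · rw [base_u, pow_one, alg_A2]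
    · rw [base_v, pow_zero]; ring
  | succ k ih =>
    have hrw : (fun x => greedyDigit x (k+1))
        = fun x => (fun y => greedyDigit y k) (greedyT x) := by
      funext x; exact g_succ x k
    constructor
    · rw [hrw, cov_c (measurable_g k) (fun y => g_abs y k), ih.1, ih.2, phi_inv_eq]
      linear_combination (-1 : ℝ) * alg_B1 (qq ^ k) 1
    · rw [hrw, cov_a (measurable_g k) (fun y => g_abs y k), ih.1, phi_inv_eq, pow_succ qq k]
      ring

lemma g_prod_abs (j m : ℕ) (y : ℝ) : |greedyDigit y j * greedyDigit y m| ≤ 1 := by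
  rw [abs_mul]
  calc |greedyDigit y j| * |greedyDigit y m| ≤ 1 * 1 :=
        mul_le_mul (g_abs y j) (g_abs y m) (abs_nonneg _) zero_le_one
    _ = 1 := mul_one 1

lemma valB (m j : ℕ) :
    (∫ x in Set.Ico (0:ℝ) 1, greedyDigit x j * greedyDigit x (j+m+1))
        = pp * (1 - qq^(j+1)) * (pp * (1 - qq^m)) ∧
    (∫ x in Set.Ico (0:ℝ) (1/φ), greedyDigit x j * greedyDigit x (j+m+1))
        = pp * (1 - qq^j) * (φ - 1) * (pp * (1 - qq^m)) := by
  induction j with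
  | zero =>
    simp only [Nat.zero_add]
    constructor
    · rw [split01 (f := fun x => greedyDigit x 0 * greedyDigit x (m+1))
        ((measurable_g 0).mul (measurable_g (m+1))) (fun y => g_prod_abs 0 (m+1) y)]
      have h1 : ∫ x in Set.Ico (0:ℝ) (1/φ), greedyDigit x 0 * greedyDigit x (m+1) = 0 := by
        rw [setIntegral_congr_fun (g := fun _ => (0:ℝ)) measurableSet_Ico
          (fun x hx => by rw [g0_eq, if_neg (not_le.mpr hx.2), zero_mul])]
        simp
      have h2 : ∫ x in Set.Ico (1/φ) (1:ℝ), greedyDigit x 0 * greedyDigit x (m+1)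
          = (φ - 1) * (pp * (1 - qq^m) * (φ - 1)) := by
        have hcongr : ∫ x in Set.Ico (1/φ) (1:ℝ), greedyDigit x 0 * greedyDigit x (m+1)
            = ∫ x in Set.Ico (1/φ) (1:ℝ), (fun y => greedyDigit y m) (greedyT x) := by
          refine setIntegral_congr_fun measurableSet_Ico fun x hx => ?_
          rw [g0_eq, if_pos hx.1, one_mul]
          exact g_succ x m
        rw [hcongr, cov_b (measurable_g m) (fun y => g_abs y m), phi_inv_eq, (valA m).2]
      rw [h1, h2, zero_add]
      linear_combination (-(pp * (1 - qq^m))) * alg_hc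
    · rw [setIntegral_congr_fun (g := fun _ => (0:ℝ)) measurableSet_Ico
        (fun x hx => by rw [g0_eq, if_neg (not_le.mpr hx.2), zero_mul])]
      simp [pow_zero]
  | succ j ih =>
    have hrw : (fun x => greedyDigit x (j+1) * greedyDigit x (j+1+m+1))
        = fun x => (fun y => greedyDigit y j * greedyDigit y (j+m+1)) (greedyT x) := by
      funext x
      have e1 : greedyDigit x (j+1) = greedyDigit (greedyT x) j := g_succ x j
      have e2 : greedyDigit x (j+1+m+1) = greedyDigit (greedyT x) (j+m+1) := by
        have : j+1+m+1 = (j+m+1)+1 := by omega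
        rw [this]; exact g_succ x (j+m+1)
      rw [e1, e2]
    have hm : Measurable fun y => greedyDigit y j * greedyDigit y (j+m+1) :=
      (measurable_g j).mul (measurable_g (j+m+1))
    constructor
    · rw [hrw, cov_c hm (fun y => g_prod_abs j (j+m+1) y), ih.1, ih.2, phi_inv_eq]
      linear_combination (-1 : ℝ) * alg_B1 (qq ^ j) (pp * (1 - qq ^ m))
    · rw [hrw, cov_a hm (fun y => g_prod_abs j (j+m+1) y), ih.1, phi_inv_eq, pow_succ qq j]
      ring


noncomputable def rr (j k : ℕ) : ℝ :=
  ∫ x in Set.Ico (0:ℝ) 1, (greedyDigit x j - pp) * (greedyDigit x k - pp)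

lemma pp_le_half : pp ≤ 1/2 := by
  rw [pp_eq]; nlinarith [phi_ge]

lemma intbleC {f : ℝ → ℝ} (hf : Measurable f) {C : ℝ} (hb : ∀ y, |f y| ≤ C) (a b : ℝ) :
    IntegrableOn f (Set.Ico a b) volume := by
  refine Integrable.mono' (g := fun _ => C) ?_ hf.aestronglyMeasurable ?_
  · exact integrableOn_const measure_Ico_lt_top.ne
  · exact Filter.Eventually.of_forall hb

lemma int_gg (j k : ℕ) :
    IntegrableOn (fun x => greedyDigit x j * greedyDigit x k) (Set.Ico (0:ℝ) 1) volume :=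
  intbleC ((measurable_g j).mul (measurable_g k)) (fun y => g_prod_abs j k y) 0 1

lemma int_cg (j : ℕ) (c : ℝ) :
    IntegrableOn (fun x => c * greedyDigit x j) (Set.Ico (0:ℝ) 1) volume :=
  intbleC ((measurable_const).mul (measurable_g j))
    (C := |c|) (fun y => by simp only [Pi.mul_apply]; rw [abs_mul]
                            exact mul_le_mul_of_nonneg_left (g_abs y j) (abs_nonneg c)
                              |>.trans (by rw [mul_one])) 0 1

lemma rr_compute (j k : ℕ) :
    rr j k = (∫ x in Set.Ico (0:ℝ) 1, greedyDigit x j * greedyDigit x k)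
      - pp * (∫ x in Set.Ico (0:ℝ) 1, greedyDigit x j)
      - pp * (∫ x in Set.Ico (0:ℝ) 1, greedyDigit x k) + pp * pp := by
  unfold rr
  have h : (fun x => (greedyDigit x j - pp) * (greedyDigit x k - pp))
      = fun x => (greedyDigit x j * greedyDigit x k - pp * greedyDigit x j
          - pp * greedyDigit x k) + pp * pp := by
    funext x; ring
  have I1 : Integrable (fun x => greedyDigit x j * greedyDigit x k - pp * greedyDigit x j)
      (volume.restrict (Set.Ico (0:ℝ) 1)) := (int_gg j k).sub (int_cg j pp)
  have I2 : Integrable (fun x => greedyDigit x j * greedyDigit x k - pp * greedyDigit x j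
      - pp * greedyDigit x k) (volume.restrict (Set.Ico (0:ℝ) 1)) := I1.sub (int_cg k pp)
  have I3 : Integrable (fun _ : ℝ => pp * pp) (volume.restrict (Set.Ico (0:ℝ) 1)) :=
    integrableOn_const measure_Ico_lt_top.ne
  rw [h, integral_add I2 I3, integral_sub I1 (int_cg k pp),
    integral_sub (int_gg j k) (int_cg j pp),
    integral_const_mul, integral_const_mul, setIntegral_const, measureReal_def, vol01, smul_eq_mul, one_mul]

lemma rr_symm (j k : ℕ) : rr j k = rr k j := by
  unfold rr
  congr 1; funext x; ring

lemma rr_offdiag (j m : ℕ) :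
    rr j (j+m+1) = pp * pp * (qq^(j+m+1) + qq^(j+m+2) - qq^m) := by
  rw [rr_compute, (valB m j).1, (valA j).1, (valA (j+m+1)).1]
  ring

lemma rr_diag (j : ℕ) :
    rr j j = pp * (1 - qq^(j+1)) - 2 * pp * (pp * (1 - qq^(j+1))) + pp * pp := by
  rw [rr_compute]
  have h : ∫ x in Set.Ico (0:ℝ) 1, greedyDigit x j * greedyDigit x j
      = ∫ x in Set.Ico (0:ℝ) 1, greedyDigit x j := by
    congr 1; funext x; exact g_sq x j
  rw [h, (valA j).1]
  ring

lemma qq_pow_le (m n : ℕ) (h : m ≤ n) : |qq|^n ≤ (1/2:ℝ)^m := by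
  calc |qq|^n ≤ (1/2:ℝ)^n := pow_le_pow_left₀ (abs_nonneg qq) qq_abs n
    _ ≤ (1/2:ℝ)^m := pow_le_pow_of_le_one (by norm_num) (by norm_num) h

lemma rr_bound_le (j k : ℕ) (hjk : j ≤ k) : |rr j k| ≤ 6 * (1/2:ℝ)^(k - j) := by
  rcases Nat.eq_or_lt_of_le hjk with rfl | hlt
  · rw [Nat.sub_self, pow_zero, mul_one, rr_diag]
    have h1 : |qq^(j+1)| ≤ 1 := by
      rw [abs_pow]; exact (qq_pow_le 0 (j+1) (Nat.zero_le _)).trans (by norm_num)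
    have h2 := pp_pos
    have h3 := pp_le_half
    rw [abs_le]; constructor <;> nlinarith [abs_nonneg (qq^(j+1)), le_abs_self (qq^(j+1)),
      neg_abs_le (qq^(j+1))]
  · obtain ⟨m, rfl⟩ : ∃ m, k = j + m + 1 := ⟨k - j - 1, by omega⟩
    have hd : j + m + 1 - j = m + 1 := by omega
    rw [hd, rr_offdiag]
    have e1 : |qq^(j+m+1)| ≤ (1/2:ℝ)^m := by rw [abs_pow]; exact qq_pow_le m _ (by omega)
    have e2 : |qq^(j+m+2)| ≤ (1/2:ℝ)^m := by rw [abs_pow]; exact qq_pow_le m _ (by omega)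
    have e3 : |qq^m| ≤ (1/2:ℝ)^m := by rw [abs_pow]; exact qq_pow_le m _ (by omega)
    have h2 := pp_pos
    have h3 := pp_le_half
    calc |pp * pp * (qq^(j+m+1) + qq^(j+m+2) - qq^m)|
        = pp * pp * |qq^(j+m+1) + qq^(j+m+2) - qq^m| := by
          rw [abs_mul, abs_mul, abs_of_pos h2]
      _ ≤ pp * pp * (|qq^(j+m+1)| + |qq^(j+m+2)| + |qq^m|) := by
          refine mul_le_mul_of_nonneg_left ?_ (by positivity)
          calc |qq^(j+m+1) + qq^(j+m+2) - qq^m|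
              ≤ |qq^(j+m+1) + qq^(j+m+2)| + |qq^m| := abs_sub _ _
            _ ≤ |qq^(j+m+1)| + |qq^(j+m+2)| + |qq^m| := by
                linarith [abs_add_le (qq^(j+m+1)) (qq^(j+m+2))]
      _ ≤ 1 * (3 * (1/2:ℝ)^m) := by
          have hS : |qq^(j+m+1)| + |qq^(j+m+2)| + |qq^m| ≤ 3*(1/2:ℝ)^m := by linarith
          have hp : pp*pp ≤ 1 := by nlinarith
          have hS0 : (0:ℝ) ≤ |qq^(j+m+1)| + |qq^(j+m+2)| + |qq^m| := by positivity
          exact mul_le_mul hp hS hS0 (by norm_num)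
      _ = 6 * (1/2:ℝ)^(m+1) := by rw [pow_succ]; ring

lemma rr_bound (j k : ℕ) : |rr j k| ≤ 6 * (1/2:ℝ)^(Nat.dist j k) := by
  rcases le_total j k with h | h
  · rw [Nat.dist_eq_sub_of_le h]; exact rr_bound_le j k h
  · rw [Nat.dist_comm, Nat.dist_eq_sub_of_le h, rr_symm]; exact rr_bound_le k j h

lemma geo (n : ℕ) : ∑ i ∈ Finset.range n, (1/2:ℝ)^i ≤ 2 := by
  have h : ∀ n, ∑ i ∈ Finset.range n, (1/2:ℝ)^i = 2 - 2 * (1/2:ℝ)^n := by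
    intro n
    induction n with
    | zero => simp
    | succ n ih => rw [Finset.sum_range_succ, ih, pow_succ]; ring
  rw [h]
  have : (0:ℝ) < (1/2:ℝ)^n := by positivity
  linarith

lemma rowsum (j N : ℕ) : ∑ k ∈ Finset.range N, (1/2:ℝ)^(Nat.dist j k) ≤ 4 := by
  rw [← Finset.sum_filter_add_sum_filter_not (Finset.range N) (· ≤ j)]
  have h1 : ∑ k ∈ (Finset.range N).filter (· ≤ j), (1/2:ℝ)^(Nat.dist j k) ≤ 2 := by
    have himg : ∑ k ∈ (Finset.range N).filter (· ≤ j), (1/2:ℝ)^(Nat.dist j k)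
        = ∑ m ∈ ((Finset.range N).filter (· ≤ j)).image (fun k => j - k), (1/2:ℝ)^m := by
      rw [Finset.sum_image]
      · refine Finset.sum_congr rfl fun k hk => ?_
        have hk' : k ≤ j := (Finset.mem_filter.mp hk).2
        rw [Nat.dist_comm, Nat.dist_eq_sub_of_le hk']
      · intro a ha b hb hab
        have ha' : a ≤ j := (Finset.mem_filter.mp ha).2
        have hb' : b ≤ j := (Finset.mem_filter.mp hb).2
        simp only at hab
        omega
    rw [himg]
    calc ∑ m ∈ ((Finset.range N).filter (· ≤ j)).image (fun k => j - k), (1/2:ℝ)^m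
        ≤ ∑ m ∈ Finset.range (j+1), (1/2:ℝ)^m := by
          refine Finset.sum_le_sum_of_subset_of_nonneg ?_ (fun m _ _ => by positivity)
          intro m hm
          obtain ⟨k, hk, rfl⟩ := Finset.mem_image.mp hm
          exact Finset.mem_range.mpr (by omega)
      _ ≤ 2 := geo _
  have h2 : ∑ k ∈ (Finset.range N).filter (fun k => ¬ (k ≤ j)), (1/2:ℝ)^(Nat.dist j k) ≤ 2 := by
    have himg : ∑ k ∈ (Finset.range N).filter (fun k => ¬ (k ≤ j)), (1/2:ℝ)^(Nat.dist j k)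
        = ∑ m ∈ ((Finset.range N).filter (fun k => ¬ (k ≤ j))).image (fun k => k - j),
            (1/2:ℝ)^m := by
      rw [Finset.sum_image]
      · refine Finset.sum_congr rfl fun k hk => ?_
        have hk' : j ≤ k := by
          have := (Finset.mem_filter.mp hk).2; omega
        rw [Nat.dist_eq_sub_of_le hk']
      · intro a ha b hb hab
        have ha' : ¬ a ≤ j := (Finset.mem_filter.mp ha).2
        have hb' : ¬ b ≤ j := (Finset.mem_filter.mp hb).2
        simp only at hab
        omega
    rw [himg]
    calc ∑ m ∈ ((Finset.range N).filter (fun k => ¬ (k ≤ j))).image (fun k => k - j), (1/2:ℝ)^m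
        ≤ ∑ m ∈ Finset.range (N+1), (1/2:ℝ)^m := by
          refine Finset.sum_le_sum_of_subset_of_nonneg ?_ (fun m _ _ => by positivity)
          intro m hm
          obtain ⟨k, hk, rfl⟩ := Finset.mem_image.mp hm
          have := Finset.mem_range.mp (Finset.mem_filter.mp hk).1
          exact Finset.mem_range.mpr (by omega)
      _ ≤ 2 := geo _
  linarith

lemma variance_bound (N : ℕ) :
    ∫ x in Set.Ico (0:ℝ) 1, (∑ k ∈ Finset.range N, greedyDigit x k - N * pp)^2 ≤ 24 * N := by
  have hint : ∀ j k : ℕ, IntegrableOn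
      (fun x => (greedyDigit x j - pp) * (greedyDigit x k - pp)) (Set.Ico (0:ℝ) 1) volume := by
    intro j k
    refine intbleC (((measurable_g j).sub measurable_const).mul
      ((measurable_g k).sub measurable_const)) (C := 4) (fun y => ?_) 0 1
    simp only [Pi.mul_apply, Pi.sub_apply]
    rw [abs_mul]
    have b1 : |greedyDigit y j - pp| ≤ 2 := by
      rw [abs_le]
      constructor <;> nlinarith [g_nonneg y j, g_le_one y j, pp_pos, pp_le_half]
    have b2 : |greedyDigit y k - pp| ≤ 2 := by
      rw [abs_le]
      constructor <;> nlinarith [g_nonneg y k, g_le_one y k, pp_pos, pp_le_half]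
    calc |greedyDigit y j - pp| * |greedyDigit y k - pp| ≤ 2 * 2 :=
          mul_le_mul b1 b2 (abs_nonneg _) (by norm_num)
      _ = 4 := by norm_num
  have hexp : (fun x => (∑ k ∈ Finset.range N, greedyDigit x k - N * pp)^2)
      = fun x => ∑ j ∈ Finset.range N, ∑ k ∈ Finset.range N,
          (greedyDigit x j - pp) * (greedyDigit x k - pp) := by
    funext x
    have h1 : ∑ k ∈ Finset.range N, greedyDigit x k - N * pp
        = ∑ k ∈ Finset.range N, (greedyDigit x k - pp) := by
      rw [Finset.sum_sub_distrib, Finset.sum_const, Finset.card_range, nsmul_eq_mul]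
    rw [h1, pow_two, Finset.sum_mul_sum]
  rw [hexp, integral_finset_sum _ (fun j _ => integrable_finset_sum _
    (fun k _ => hint j k))]
  have hswap : ∀ j, ∫ x in Set.Ico (0:ℝ) 1, (∑ k ∈ Finset.range N,
      (greedyDigit x j - pp) * (greedyDigit x k - pp))
      = ∑ k ∈ Finset.range N, rr j k := fun j =>
    integral_finset_sum _ (fun k _ => hint j k)
  calc ∑ j ∈ Finset.range N, ∫ x in Set.Ico (0:ℝ) 1, (∑ k ∈ Finset.range N,
        (greedyDigit x j - pp) * (greedyDigit x k - pp))
      = ∑ j ∈ Finset.range N, ∑ k ∈ Finset.range N, rr j k := by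
        exact Finset.sum_congr rfl fun j _ => hswap j
    _ ≤ ∑ j ∈ Finset.range N, ∑ k ∈ Finset.range N, |rr j k| :=
        Finset.sum_le_sum fun j _ => Finset.sum_le_sum fun k _ => le_abs_self _
    _ ≤ ∑ j ∈ Finset.range N, ∑ k ∈ Finset.range N, 6 * (1/2:ℝ)^(Nat.dist j k) :=
        Finset.sum_le_sum fun j _ => Finset.sum_le_sum fun k _ => rr_bound j k
    _ ≤ ∑ j ∈ Finset.range N, 6 * 4 := by
        refine Finset.sum_le_sum fun j _ => ?_
        rw [← Finset.mul_sum]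
        exact mul_le_mul_of_nonneg_left (rowsum j N) (by norm_num)
    _ = 24 * N := by rw [Finset.sum_const, Finset.card_range, nsmul_eq_mul]; ring


lemma measurable_S (n : ℕ) : Measurable fun x => ∑ k ∈ Finset.range n, greedyDigit x k :=
  Finset.measurable_sum _ fun k _ => measurable_g k

lemma S_nonneg (x : ℝ) (n : ℕ) : 0 ≤ ∑ k ∈ Finset.range n, greedyDigit x k :=
  Finset.sum_nonneg fun k _ => g_nonneg x k

lemma S_le (x : ℝ) (n : ℕ) : ∑ k ∈ Finset.range n, greedyDigit x k ≤ n := by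
  calc ∑ k ∈ Finset.range n, greedyDigit x k ≤ ∑ k ∈ Finset.range n, 1 :=
        Finset.sum_le_sum fun k _ => g_le_one x k
    _ = n := by rw [Finset.sum_const, Finset.card_range, nsmul_eq_mul, mul_one]

lemma sq_ae : ∀ᵐ x ∂(volume.restrict (Set.Ico (0:ℝ) 1)),
    Tendsto (fun M : ℕ => (∑ k ∈ Finset.range (M^2), greedyDigit x k) / (M:ℝ)^2 - pp)
      atTop (nhds 0) := by
  set μ := volume.restrict (Set.Ico (0:ℝ) 1) with hμ
  set F : ℕ → ℝ → ℝ := fun M x =>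
    ((∑ k ∈ Finset.range (M^2), greedyDigit x k) / (M:ℝ)^2 - pp)^2 with hF
  have hFmeas : ∀ M, Measurable (F M) := fun M =>
    (((measurable_S (M^2)).div_const _).sub measurable_const).pow_const 2
  have hFnn : ∀ M x, 0 ≤ F M x := fun M x => sq_nonneg _
  have hratio : ∀ M x, 0 ≤ (∑ k ∈ Finset.range (M^2), greedyDigit x k) / (M:ℝ)^2 ∧
      (∑ k ∈ Finset.range (M^2), greedyDigit x k) / (M:ℝ)^2 ≤ 1 := by
    intro M x
    rcases Nat.eq_zero_or_pos M with rfl | hM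
    · simp
    · have hm2 : (0:ℝ) < (M:ℝ)^2 := by positivity
      constructor
      · exact div_nonneg (S_nonneg x _) hm2.le
      · rw [div_le_one hm2]
        calc ∑ k ∈ Finset.range (M^2), greedyDigit x k ≤ ((M^2 : ℕ) : ℝ) := S_le x _
          _ = (M:ℝ)^2 := by push_cast; ring
  have hFbd : ∀ M x, F M x ≤ 1 := by
    intro M x
    have h := hratio M x
    have hp1 := pp_pos
    have hp2 := pp_le_half
    rw [hF]
    nlinarith [h.1, h.2]
  have hFint : ∀ M, Integrable (F M) μ := fun M =>
    intbleC (hFmeas M) (C := 1) (fun y => by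
      rw [abs_of_nonneg (hFnn M y)]; exact hFbd M y) 0 1
  -- integral bound
  have key : ∀ M : ℕ, 1 ≤ M → ∫ x, F M x ∂μ ≤ 24 / (M:ℝ)^2 := by
    intro M hM
    have hm2 : (0:ℝ) < (M:ℝ)^2 := by positivity
    have hid : F M = fun x => (((M:ℝ)^2)⁻¹)^2 *
        ((∑ k ∈ Finset.range (M^2), greedyDigit x k) - ((M^2 : ℕ) : ℝ) * pp)^2 := by
      funext x
      rw [hF]
      have hc : ((M^2 : ℕ) : ℝ) = (M:ℝ)^2 := by push_cast; ring
      rw [hc]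
      field_simp
      try ring
    rw [hid, hμ, integral_const_mul]
    have hvb := variance_bound (M^2)
    calc (((M:ℝ)^2)⁻¹)^2 * ∫ x in Set.Ico (0:ℝ) 1,
          ((∑ k ∈ Finset.range (M^2), greedyDigit x k) - ((M^2:ℕ):ℝ) * pp)^2
        ≤ (((M:ℝ)^2)⁻¹)^2 * (24 * ((M^2 : ℕ):ℝ)) := by
          exact mul_le_mul_of_nonneg_left hvb (by positivity)
      _ = 24 / (M:ℝ)^2 := by
          have hc : ((M^2 : ℕ) : ℝ) = (M:ℝ)^2 := by push_cast; ring
          rw [hc]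
          field_simp
          try ring
  -- summable bound sequence
  set c : ℕ → ℝ := fun M => if M = 0 then 1 else 24 / (M:ℝ)^2 with hc
  have hcnn : ∀ M, 0 ≤ c M := by
    intro M; rw [hc]; dsimp only; split <;> positivity
  have hkey' : ∀ M, ∫ x, F M x ∂μ ≤ c M := by
    intro M
    rcases Nat.eq_zero_or_pos M with rfl | hM
    · rw [hc]; dsimp only; rw [if_pos rfl]
      calc ∫ x, F 0 x ∂μ ≤ ∫ x, (fun _ => (1:ℝ)) x ∂μ :=
            integral_mono (hFint 0) (intbleC measurable_const (C := 1)
              (fun y => by rw [abs_one]) 0 1) (fun x => hFbd 0 x)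
        _ = 1 := by rw [hμ, setIntegral_const, measureReal_def, vol01, smul_eq_mul, one_mul]
    · rw [hc]; dsimp only; rw [if_neg (Nat.pos_iff_ne_zero.mp hM)]
      exact key M hM
  have hcsum : Summable c := by
    have hs2 : Summable (fun M : ℕ => 24 / ((M:ℝ))^2) := by
      have := (Real.summable_one_div_nat_pow (p := 2)).mpr (by norm_num)
      simpa [mul_one_div, div_eq_mul_inv] using this.mul_left 24
    have h1 : Summable (fun M : ℕ => c (M + 1)) := by
      refine ((summable_nat_add_iff 1).mpr hs2).congr fun M => ?_
      rw [hc]; dsimp only; rw [if_neg (Nat.succ_ne_zero M)]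
    exact (summable_nat_add_iff 1).mp h1
  -- lintegral
  set G : ℕ → ℝ → ENNReal := fun M x => ENNReal.ofReal (F M x) with hG
  have hGle : ∀ M, ∫⁻ x, G M x ∂μ ≤ ENNReal.ofReal (c M) := by
    intro M
    rw [hG]; dsimp only
    rw [← MeasureTheory.ofReal_integral_eq_lintegral_ofReal (hFint M)
      (Filter.Eventually.of_forall (hFnn M))]
    exact ENNReal.ofReal_le_ofReal (hkey' M)
  have htsum : ∑' M, ∫⁻ x, G M x ∂μ ≠ ⊤ := by
    refine ne_top_of_le_ne_top ?_ (ENNReal.tsum_le_tsum hGle)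
    rw [← ENNReal.ofReal_tsum_of_nonneg hcnn hcsum]
    exact ENNReal.ofReal_ne_top
  have hae : ∀ᵐ x ∂μ, (∑' M, G M x) < ⊤ := by
    refine ae_lt_top (Measurable.ennreal_tsum fun M => (hFmeas M).ennreal_ofReal) ?_
    rw [lintegral_tsum fun M => ((hFmeas M).ennreal_ofReal).aemeasurable]
    exact htsum
  refine hae.mono fun x hx => ?_
  have hG0 : Tendsto (fun M => G M x) atTop (nhds 0) :=
    ENNReal.tendsto_atTop_zero_of_tsum_ne_top hx.ne
  have hF0 : Tendsto (fun M => F M x) atTop (nhds 0) := by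
    have h1 : Tendsto (fun M => (G M x).toReal) atTop (nhds (0:ENNReal).toReal) :=
      (ENNReal.tendsto_toReal (by simp)).comp hG0
    simp only [ENNReal.toReal_zero] at h1
    refine h1.congr fun M => ?_
    rw [hG]; dsimp only; exact ENNReal.toReal_ofReal (hFnn M x)
  -- from squares to the values
  have habs : Tendsto (fun M : ℕ =>
      |(∑ k ∈ Finset.range (M^2), greedyDigit x k) / (M:ℝ)^2 - pp|) atTop (nhds 0) := by
    have h2 : Tendsto (fun M => Real.sqrt (F M x)) atTop (nhds (Real.sqrt 0)) :=
      (Real.continuous_sqrt.tendsto 0).comp hF0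
    rw [Real.sqrt_zero] at h2
    refine h2.congr fun M => ?_
    rw [hF]; dsimp only; exact Real.sqrt_sq_eq_abs _
  exact tendsto_of_tendsto_of_tendsto_of_le_of_le (by simpa using habs.neg) habs
    (fun M => neg_abs_le _) (fun M => le_abs_self _)


lemma interp {s : ℕ → ℝ} (h0 : ∀ n, 0 ≤ s n) (hmono : ∀ n, s n ≤ s (n+1))
    (hstep : ∀ n, s (n+1) ≤ s n + 1) {p : ℝ}
    (ht : Tendsto (fun M : ℕ => s (M^2) / (M:ℝ)^2) atTop (nhds p)) :
    Tendsto (fun N : ℕ => s N / (N:ℝ)) atTop (nhds p) := by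
  have hmono' : Monotone s := monotone_nat_of_le_succ hmono
  have hlin : ∀ m n : ℕ, m ≤ n → s n ≤ s m + ((n:ℝ) - (m:ℝ)) := by
    intro m n h
    induction n, h using Nat.le_induction with
    | base => simp
    | succ n hn ih =>
      have := hstep n
      push_cast
      push_cast at ih
      linarith
  have hsqrt : Tendsto (fun N : ℕ => Nat.sqrt N) atTop atTop := by
    refine Filter.tendsto_atTop.mpr fun b => Filter.eventually_atTop.mpr ⟨b*b, fun n hn => ?_⟩
    exact Nat.le_sqrt.mpr hn
  have hfrac : Tendsto (fun M : ℕ => (M:ℝ)/((M:ℝ)+1)) atTop (nhds 1) := by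
    have h1 := tendsto_one_div_add_atTop_nhds_zero_nat (𝕜 := ℝ)
    have h2 : Tendsto (fun M : ℕ => 1 - 1/((M:ℝ)+1)) atTop (nhds (1 - 0)) :=
      tendsto_const_nhds.sub h1
    rw [sub_zero] at h2
    refine h2.congr fun M => ?_
    have hM : (M:ℝ) + 1 ≠ 0 := by positivity
    field_simp; ring
  have aux1 : Tendsto (fun M : ℕ => ((M:ℝ)/((M:ℝ)+1))^2) atTop (nhds 1) := by
    have := hfrac.mul hfrac
    rw [mul_one] at this
    refine this.congr fun M => ?_
    rw [pow_two]
  have aux2 : Tendsto (fun M : ℕ => (2*(M:ℝ)+1)/(M:ℝ)^2) atTop (nhds 0) := by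
    refine tendsto_of_tendsto_of_tendsto_of_le_of_le' tendsto_const_nhds
      (tendsto_const_div_atTop_nhds_zero_nat 3) ?_ ?_
    · filter_upwards [Filter.eventually_ge_atTop 1] with M hM
      have : (0:ℝ) < (M:ℝ) := by exact_mod_cast hM
      positivity
    · filter_upwards [Filter.eventually_ge_atTop 1] with M hM
      have hM' : (1:ℝ) ≤ (M:ℝ) := by exact_mod_cast hM
      have hMpos : (0:ℝ) < (M:ℝ) := by linarith
      rw [div_le_div_iff₀ (by positivity) hMpos]
      nlinarith
  have hU : Tendsto (fun N : ℕ => s ((Nat.sqrt N)^2) / ((Nat.sqrt N : ℝ))^2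
      + (2*((Nat.sqrt N : ℕ):ℝ)+1)/((Nat.sqrt N : ℕ):ℝ)^2) atTop (nhds (p + 0)) :=
    (ht.comp hsqrt).add (aux2.comp hsqrt)
  have hL : Tendsto (fun N : ℕ => (s ((Nat.sqrt N)^2) / ((Nat.sqrt N : ℝ))^2)
      * (((Nat.sqrt N : ℕ):ℝ)/(((Nat.sqrt N : ℕ):ℝ)+1))^2) atTop (nhds (p * 1)) :=
    (ht.comp hsqrt).mul (aux1.comp hsqrt)
  rw [add_zero] at hU
  rw [mul_one] at hL
  refine tendsto_of_tendsto_of_tendsto_of_le_of_le' hL hU ?_ ?_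
  · filter_upwards [Filter.eventually_ge_atTop 1] with N hN
    set m := Nat.sqrt N with hm
    have hm1 : 1 ≤ m := Nat.le_sqrt.mpr (by simpa using hN)
    have hm2 : m^2 ≤ N := Nat.sqrt_le' N
    have hm3 : N < (m+1)^2 := Nat.lt_succ_sqrt' N
    have hmR : (1:ℝ) ≤ (m:ℝ) := by exact_mod_cast hm1
    have hNR : (1:ℝ) ≤ (N:ℝ) := by exact_mod_cast hN
    have hm2R : ((m:ℝ))^2 ≤ (N:ℝ) := by
      have : ((m^2:ℕ):ℝ) ≤ (N:ℝ) := by exact_mod_cast hm2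
      push_cast at this; linarith
    have hm3R : (N:ℝ) ≤ ((m:ℝ)+1)^2 := by
      have : ((N:ℕ):ℝ) ≤ (((m+1)^2 : ℕ):ℝ) := by exact_mod_cast hm3.le
      push_cast at this; linarith
    have heq : s (m^2) / ((m:ℝ))^2 * (((m:ℝ))/(((m:ℝ))+1))^2
        = s (m^2) / (((m:ℝ))+1)^2 := by
      have h1 : ((m:ℝ)) ≠ 0 := by linarith
      have h2 : ((m:ℝ)) + 1 ≠ 0 := by linarith
      field_simp
      try ring
    rw [heq]
    have hNpos : (0:ℝ) < (N:ℝ) := by linarith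
    exact div_le_div₀ (h0 N) (hmono' hm2) hNpos hm3R
  · filter_upwards [Filter.eventually_ge_atTop 1] with N hN
    set m := Nat.sqrt N with hm
    have hm1 : 1 ≤ m := Nat.le_sqrt.mpr (by simpa using hN)
    have hm2 : m^2 ≤ N := Nat.sqrt_le' N
    have hm3 : N < (m+1)^2 := Nat.lt_succ_sqrt' N
    have hmR : (1:ℝ) ≤ (m:ℝ) := by exact_mod_cast hm1
    have hNR : (1:ℝ) ≤ (N:ℝ) := by exact_mod_cast hN
    have hm2R : ((m:ℝ))^2 ≤ (N:ℝ) := by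
      have : ((m^2:ℕ):ℝ) ≤ (N:ℝ) := by exact_mod_cast hm2
      push_cast at this; linarith
    have hm3R : (N:ℝ) ≤ ((m:ℝ)+1)^2 := by
      have : ((N:ℕ):ℝ) ≤ (((m+1)^2 : ℕ):ℝ) := by exact_mod_cast hm3.le
      push_cast at this; linarith
    have hs1 : s N ≤ s (m^2) + ((N:ℝ) - ((m^2:ℕ):ℝ)) := hlin (m^2) N hm2
    have hs2 : (N:ℝ) - ((m^2:ℕ):ℝ) ≤ 2*(m:ℝ)+1 := by
      push_cast
      nlinarith
    have hNpos : (0:ℝ) < (N:ℝ) := by linarith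
    have hmpos : (0:ℝ) < ((m:ℝ))^2 := by nlinarith
    calc s N / (N:ℝ) ≤ (s (m^2) + (2*(m:ℝ)+1)) / (N:ℝ) := by
          gcongr <;> linarith [hs1, hs2]
      _ = s (m^2) / (N:ℝ) + (2*(m:ℝ)+1) / (N:ℝ) := by rw [add_div]
      _ ≤ s (m^2) / ((m:ℝ))^2 + (2*(m:ℝ)+1) / ((m:ℝ))^2 := by
          gcongr <;> linarith [h0 (m^2), hm2R, hmpos]

lemma ae01 : ∀ᵐ x ∂(volume.restrict (Set.Ico (0:ℝ) 1)),
    Tendsto (fun N : ℕ => (∑ k ∈ Finset.range N, greedyDigit x k) / (N:ℝ))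
      atTop (nhds pp) := by
  refine sq_ae.mono fun x hx => ?_
  have ht : Tendsto (fun M : ℕ =>
      (∑ k ∈ Finset.range (M^2), greedyDigit x k) / (M:ℝ)^2) atTop (nhds pp) := by
    have := hx.add_const pp
    simpa using this
  refine interp (fun n => S_nonneg x n) (fun n => ?_) (fun n => ?_) ht
  · rw [Finset.sum_range_succ]
    linarith [g_nonneg x n]
  · rw [Finset.sum_range_succ]
    linarith [g_le_one x n]


lemma frac_tendsto : Tendsto (fun M : ℕ => (M:ℝ)/((M:ℝ)+1)) atTop (nhds 1) := by
  have h1 := tendsto_one_div_add_atTop_nhds_zero_nat (𝕜 := ℝ)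
  have h2 : Tendsto (fun M : ℕ => 1 - 1/((M:ℝ)+1)) atTop (nhds (1 - 0)) :=
    tendsto_const_nhds.sub h1
  rw [sub_zero] at h2
  refine h2.congr fun M => ?_
  have hM : (M:ℝ) + 1 ≠ 0 := by positivity
  field_simp; ring

lemma mem_A_of_T {x : ℝ}
    (h : Tendsto (fun N : ℕ => (∑ k ∈ Finset.range N, greedyDigit (greedyT x) k) / (N:ℝ))
      atTop (nhds pp)) :
    Tendsto (fun N : ℕ => (∑ k ∈ Finset.range N, greedyDigit x k) / (N:ℝ))
      atTop (nhds pp) := by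
  set c := greedyDigit x 0 with hc
  have hsum : ∀ N : ℕ, ∑ k ∈ Finset.range (N+1), greedyDigit x k
      = c + ∑ k ∈ Finset.range N, greedyDigit (greedyT x) k := by
    intro N
    rw [Finset.sum_range_succ']
    have : ∀ k, greedyDigit x (k+1) = greedyDigit (greedyT x) k := fun k => g_succ x k
    rw [Finset.sum_congr rfl fun k _ => this k]
    ring
  rw [← tendsto_add_atTop_iff_nat 1]
  have hid : ∀ N : ℕ, (∑ k ∈ Finset.range (N+1), greedyDigit x k) / ((N+1 : ℕ):ℝ)
      = c * (1/((N:ℝ)+1))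
        + ((∑ k ∈ Finset.range N, greedyDigit (greedyT x) k) / (N:ℝ)) * ((N:ℝ)/((N:ℝ)+1)) := by
    intro N
    rw [hsum N]
    rcases Nat.eq_zero_or_pos N with rfl | hN
    · simp
    · have hN0 : (N:ℝ) ≠ 0 := by
        exact_mod_cast Nat.pos_iff_ne_zero.mp hN
      have hN1 : (N:ℝ) + 1 ≠ 0 := by positivity
      push_cast
      field_simp
      try ring
  have h1 : Tendsto (fun N : ℕ => c * (1/((N:ℝ)+1))) atTop (nhds (c * 0)) :=
    tendsto_const_nhds.mul tendsto_one_div_add_atTop_nhds_zero_nat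
  have h2 : Tendsto (fun N : ℕ =>
      ((∑ k ∈ Finset.range N, greedyDigit (greedyT x) k) / (N:ℝ)) * ((N:ℝ)/((N:ℝ)+1)))
      atTop (nhds (pp * 1)) := h.mul frac_tendsto
  have h3 := h1.add h2
  rw [mul_zero, mul_one, zero_add] at h3
  exact h3.congr fun N => (hid N).symm

lemma T_maps {x : ℝ} (h0 : 0 ≤ x) (h1 : x < φ) : 0 ≤ greedyT x ∧ greedyT x < φ := by
  unfold greedyT
  split
  · rename_i hlt
    constructor
    · exact mul_nonneg phi_pos.le h0
    · have : φ * x < φ * (1/φ) := by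
        exact mul_lt_mul_of_pos_left hlt phi_pos
      rw [mul_one_div, div_self phi_ne] at this
      linarith [one_lt_phi]
  · rename_i hge
    push_neg at hge
    constructor
    · have h2 : φ * (1/φ) ≤ φ * x := mul_le_mul_of_nonneg_left hge phi_pos.le
      rw [mul_one_div, div_self phi_ne] at h2
      linarith
    · have h2 : φ * x < φ * φ := mul_lt_mul_of_pos_left h1 phi_pos
      nlinarith [phi_sq]

lemma iter_maps (n : ℕ) {x : ℝ} (h0 : 0 ≤ x) (h1 : x < φ) :
    0 ≤ greedyT^[n] x ∧ greedyT^[n] x < φ := by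
  induction n with
  | zero => exact ⟨h0, h1⟩
  | succ n ih =>
    rw [Function.iterate_succ_apply']
    exact T_maps ih.1 ih.2

lemma escape {x : ℝ} (h0 : 0 ≤ x) (h1 : x < φ) :
    ∃ n, greedyT^[n] x ∈ Set.Ico (0:ℝ) 1 := by
  by_contra hcon
  push_neg at hcon
  have hge1 : ∀ n, 1 ≤ greedyT^[n] x := by
    intro n
    have := hcon n
    have hm := iter_maps n h0 h1
    rcases le_or_gt 1 (greedyT^[n] x) with h | h
    · exact h
    · exact absurd ⟨hm.1, h⟩ this
  have growth : ∀ n, φ - greedyT^[n] x = φ^n * (φ - x) := by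
    intro n
    induction n with
    | zero => simp
    | succ n ih =>
      rw [Function.iterate_succ_apply']
      set y := greedyT^[n] x with hy
      have hy1 : 1 ≤ y := hge1 n
      have hTy : greedyT y = φ * y - 1 := by
        unfold greedyT
        rw [if_neg (not_lt.mpr (by linarith [phi_inv_lt_one]))]
      rw [hTy]
      rw [pow_succ]
      linear_combination ih * φ - phi_sq
  obtain ⟨n, hn⟩ := pow_unbounded_of_one_lt (φ / (φ - x)) one_lt_phi
  have hpos : 0 < φ - x := by linarith
  rw [div_lt_iff₀ hpos] at hn
  have := growth n
  have hb := (iter_maps n h0 h1).1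
  linarith

lemma iter_A {x : ℝ} (n : ℕ)
    (h : Tendsto (fun N : ℕ => (∑ k ∈ Finset.range N, greedyDigit (greedyT^[n] x) k) / (N:ℝ))
      atTop (nhds pp)) :
    Tendsto (fun N : ℕ => (∑ k ∈ Finset.range N, greedyDigit x k) / (N:ℝ))
      atTop (nhds pp) := by
  induction n generalizing x with
  | zero => exact h
  | succ n ih =>
    rw [show ∀ y, greedyT^[n+1] y = greedyT^[n] (greedyT y) from
      fun y => Function.iterate_succ_apply greedyT n y] at h
    exact mem_A_of_T (ih h)

lemma pre_null {Z : Set ℝ} (h0 : volume Z = 0) : volume (greedyT ⁻¹' Z) = 0 := by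
  have hsub : greedyT ⁻¹' Z ⊆ ((φ * ·) ⁻¹' Z) ∪ ((φ * ·) ⁻¹' ((· + (-1)) ⁻¹' Z)) := by
    intro x hx
    simp only [Set.mem_preimage] at hx ⊢
    unfold greedyT at hx
    by_cases hlt : x < 1 / φ
    · rw [if_pos hlt] at hx
      exact Or.inl hx
    · rw [if_neg hlt] at hx
      right
      simp only [Set.mem_preimage]
      rw [← sub_eq_add_neg]
      exact hx
  refine measure_mono_null hsub (measure_union_null ?_ ?_)
  · rw [Real.volume_preimage_mul_left phi_ne, h0, mul_zero]
  · rw [Real.volume_preimage_mul_left phi_ne]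
    have : volume ((· + (-1:ℝ)) ⁻¹' Z) = volume Z := by
      exact measure_preimage_add_right volume (-1) Z
    rw [this, h0, mul_zero]

lemma iter_pre_null (n : ℕ) {Z : Set ℝ} (h0 : volume Z = 0) :
    volume (greedyT^[n] ⁻¹' Z) = 0 := by
  induction n with
  | zero => simpa using h0
  | succ n ih =>
    rw [Function.iterate_succ, Set.preimage_comp]
    exact pre_null ih

end GM

theorem lebesgue_ae_digit_frequency :
    ∀ᵐ x ∂(volume.restrict (Set.Icc (0 : ℝ) (1 / (goldenMean - 1)))),
      Tendsto (fun N : ℕ => (∑ k ∈ Finset.range N, greedyDigit x k) / N)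
        atTop (nhds (1 / (goldenMean ^ 2 + 1))) := by
  have hset : 1 / (goldenMean - 1) = goldenMean := by
    rw [← GM.phi_inv, one_div_one_div]
  have h01 : volume ({x : ℝ | ¬ Tendsto
      (fun N : ℕ => (∑ k ∈ Finset.range N, greedyDigit x k) / (N:ℝ))
        atTop (nhds GM.pp)} ∩ Set.Ico (0:ℝ) 1) = 0 := by
    have := ae_iff.mp GM.ae01
    rwa [Measure.restrict_apply' measurableSet_Ico] at this
  set Z := toMeasurable volume ({x : ℝ | ¬ Tendsto
      (fun N : ℕ => (∑ k ∈ Finset.range N, greedyDigit x k) / (N:ℝ))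
        atTop (nhds GM.pp)} ∩ Set.Ico (0:ℝ) 1) with hZ
  have hZ0 : volume Z = 0 := by
    rw [hZ, measure_toMeasurable]; exact h01
  have hZsub : {x : ℝ | ¬ Tendsto
      (fun N : ℕ => (∑ k ∈ Finset.range N, greedyDigit x k) / (N:ℝ))
        atTop (nhds GM.pp)} ∩ Set.Ico (0:ℝ) 1 ⊆ Z := subset_toMeasurable _ _
  rw [hset, ae_iff, Measure.restrict_apply' measurableSet_Icc]
  refine measure_mono_null ?_ (measure_union_null (measure_singleton goldenMean)
    (measure_iUnion_null fun n => GM.iter_pre_null n hZ0))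
  rintro x ⟨hx1, hx2⟩
  by_cases hxe : x = goldenMean
  · exact Or.inl hxe
  · right
    have hlt : x < goldenMean := lt_of_le_of_ne hx2.2 hxe
    obtain ⟨n, hn⟩ := GM.escape hx2.1 hlt
    refine Set.mem_iUnion.mpr ⟨n, ?_⟩
    refine hZsub ⟨?_, hn⟩
    intro hPTn
    exact hx1 (GM.iter_A n hPTn)
end

section
/- Let β = (1+√5)/2 and let P denote the golden-mean normalization operator. If (a_n) ∈ {0,1}^ℕ can be written as a concatenation w₁w₂w₃⋯ of finite words where each w_i for i ≥ 2 begins with 00, then P(a) = P(w₁)P(w₂)P(w₃)⋯, i.e. normalization can be performed blockwise. -/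
open MeasureTheory Filter

noncomputable def greedyDigit2 (x : ℝ) (k : ℕ) : Fin 2 :=
  if 1 / goldenMean ≤ greedyT^[k] x then 1 else 0

local notation "γ" => goldenMean

lemma one_lt_gm : 1 < γ := by
  have h : (2:ℝ) < Real.sqrt 5 := by
    have := Real.sq_sqrt (by norm_num : (5:ℝ) ≥ 0)
    nlinarith [Real.sqrt_nonneg 5]
  unfold goldenMean; linarith

lemma gm_pos : 0 < γ := lt_trans one_pos one_lt_gm

lemma gm_sq : γ * γ = γ + 1 := by
  have := Real.sq_sqrt (by norm_num : (5:ℝ) ≥ 0)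
  unfold goldenMean; nlinarith

lemma gm_inv : γ⁻¹ = γ - 1 := by
  have h := gm_pos
  field_simp
  nlinarith [gm_sq]

lemma gm_inv_pos : 0 < γ⁻¹ := inv_pos.2 gm_pos
lemma gm_inv_lt_one : γ⁻¹ < 1 := by
  rw [inv_lt_one_iff₀]; right; exact one_lt_gm
lemma gm_ne : γ ≠ 0 := ne_of_gt gm_pos
lemma one_div_gm : 1 / γ = γ⁻¹ := one_div γ

lemma gm_zpow (n : ℕ) : γ ^ (-((n : ℤ) + 1)) = γ⁻¹ ^ (n + 1) := by
  rw [show (-((n:ℤ)+1)) = -(((n+1:ℕ)):ℤ) by push_cast; ring, zpow_neg, zpow_natCast,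
    inv_pow]

noncomputable def projPi (a : ℕ → Fin 2) : ℝ :=
  ∑' n : ℕ, (a n : ℝ) * goldenMean ^ (-((n : ℤ) + 1))

noncomputable def normalizeSeq (a : ℕ → Fin 2) : ℕ → Fin 2 :=
  fun n => greedyDigit2 (projPi a) n

noncomputable def wordVal (w : List (Fin 2)) : ℝ :=
  ∑ i ∈ Finset.range w.length, ((w.getD i 0 : Fin 2) : ℝ) * goldenMean ^ (-((i : ℤ) + 1))

noncomputable def normalizeWord (w : List (Fin 2)) : List (Fin 2) :=
  (List.range w.length).map (greedyDigit2 (wordVal w))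

def partialLen (w : ℕ → List (Fin 2)) (i : ℕ) : ℕ :=
  ∑ j ∈ Finset.range i, (w j).length

def blockIndex (w : ℕ → List (Fin 2)) (n : ℕ) : ℕ :=
  Nat.findGreatest (fun i => partialLen w i ≤ n) n

def concatWords (w : ℕ → List (Fin 2)) : ℕ → Fin 2 :=
  fun n => (w (blockIndex w n)).getD (n - partialLen w (blockIndex w n)) 0

-- digit bound
lemma fin2_le (c : Fin 2) : (c : ℝ) ≤ 1 := by
  fin_cases c <;> norm_num

lemma fin2_nonneg (c : Fin 2) : (0:ℝ) ≤ (c : ℝ) := by positivity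

lemma summable_proj (a : ℕ → Fin 2) :
    Summable (fun n : ℕ => (a n : ℝ) * γ ^ (-((n : ℤ) + 1))) := by
  refine Summable.of_nonneg_of_le (fun n => mul_nonneg (fin2_nonneg _) (zpow_nonneg gm_pos.le _)) (fun n => ?_)
    (((summable_geometric_of_lt_one (le_of_lt gm_inv_pos) gm_inv_lt_one)).mul_left γ⁻¹)
  rw [gm_zpow, pow_succ']
  have h1 : (0:ℝ) ≤ γ⁻¹ * γ⁻¹ ^ n := mul_nonneg gm_inv_pos.le (pow_nonneg gm_inv_pos.le n)
  nlinarith [fin2_le (a n), fin2_nonneg (a n)]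

lemma gm_pow_fib (k : ℕ) : γ ^ (k+2) = γ ^ (k+1) + γ ^ k := by
  calc γ ^ (k+2) = γ ^ k * (γ * γ) := by ring
  _ = γ ^ k * (γ + 1) := by rw [gm_sq]
  _ = γ ^ (k+1) + γ ^ k := by ring

lemma wordVal_eq (w : List (Fin 2)) :
    wordVal w = ∑ i ∈ Finset.range w.length, ((w.getD i 0 : Fin 2) : ℝ) * γ⁻¹ ^ (i+1) := by
  unfold wordVal; exact Finset.sum_congr rfl fun i _ => by rw [gm_zpow]

lemma wordVal_nil : wordVal ([] : List (Fin 2)) = 0 := by simp [wordVal]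

lemma wordVal_cons (c : Fin 2) (t : List (Fin 2)) :
    wordVal (c :: t) = (c : ℝ) * γ⁻¹ + γ⁻¹ * wordVal t := by
  rw [wordVal_eq, wordVal_eq, List.length_cons, Finset.sum_range_succ']
  simp only [List.getD_cons_succ, List.getD_cons_zero]
  rw [Finset.mul_sum, add_comm]
  congr 1
  · norm_num
  · exact Finset.sum_congr rfl fun i _ => by ring

lemma wordVal_nonneg (w : List (Fin 2)) : 0 ≤ wordVal w := by
  rw [wordVal_eq]
  exact Finset.sum_nonneg fun i _ => mul_nonneg (fin2_nonneg _) (pow_nonneg gm_inv_pos.le _)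

lemma wordVal_le (w : List (Fin 2)) : wordVal w ≤ γ - γ * γ⁻¹ ^ w.length := by
  induction w with
  | nil => simp [wordVal_nil]
  | cons c t ih =>
    rw [wordVal_cons, List.length_cons]
    have h1 : (c:ℝ) * γ⁻¹ ≤ γ⁻¹ := mul_le_of_le_one_left gm_inv_pos.le (fin2_le c) |>.trans (by
      nlinarith [fin2_le c, fin2_nonneg c, gm_inv_pos])
    have h2 : γ⁻¹ * wordVal t ≤ γ⁻¹ * (γ - γ * γ⁻¹ ^ t.length) :=
      mul_le_mul_of_nonneg_left ih gm_inv_pos.le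
    have h3 : γ⁻¹ * γ = 1 := inv_mul_cancel₀ gm_ne
    have h4 : γ⁻¹ + 1 = γ := by rw [gm_inv]; ring
    calc (c:ℝ) * γ⁻¹ + γ⁻¹ * wordVal t ≤ γ⁻¹ + γ⁻¹ * (γ - γ * γ⁻¹ ^ t.length) := by linarith
    _ = γ - γ * γ⁻¹ ^ (t.length + 1) := by
        rw [pow_succ]
        field_simp
        ring_nf
        nlinarith [gm_sq, pow_nonneg gm_inv_pos.le t.length]

lemma greedyT_nonneg {x : ℝ} (hx : 0 ≤ x) : 0 ≤ greedyT x := by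
  unfold greedyT
  split_ifs with h
  · exact mul_nonneg gm_pos.le hx
  · rw [one_div, not_lt] at h
    have : γ * γ⁻¹ ≤ γ * x := mul_le_mul_of_nonneg_left h gm_pos.le
    rw [mul_inv_cancel₀ gm_ne] at this
    linarith

lemma greedyT_iter_nonneg {x : ℝ} (hx : 0 ≤ x) (k : ℕ) : 0 ≤ greedyT^[k] x := by
  induction k with
  | zero => simpa
  | succ n ih => rw [Function.iterate_succ_apply']; exact greedyT_nonneg ih

/-- Lemma C': if `y < 1/γ` has greedy expansion dying in `ℓ` steps then
`y ≤ 1/γ - γ^{-(ℓ+1)}`, scaled form. -/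
lemma greedy_zero_bound : ∀ ℓ : ℕ, ∀ y : ℝ, 0 ≤ y → y < γ⁻¹ →
    greedyT^[ℓ] y = 0 → γ ^ (ℓ+1) * y ≤ γ ^ ℓ - 1 := by
  intro ℓ
  induction ℓ using Nat.strong_induction_on with
  | _ ℓ IH =>
    intro y hy0 hy1 hT
    match ℓ, hT with
    | 0, hT =>
      simp only [Function.iterate_zero, id_eq] at hT
      subst hT; norm_num
    | (ℓ'+1), hT =>
      rw [Function.iterate_succ_apply] at hT
      have hTy : greedyT y = γ * y := by
        unfold greedyT; rw [if_pos (by rwa [one_div])]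
      rw [hTy] at hT
      by_cases h2 : γ * y < γ⁻¹
      · have := IH ℓ' (Nat.lt_succ_self _) (γ * y) (mul_nonneg gm_pos.le hy0) h2 hT
        have hm : γ ^ ℓ' ≤ γ ^ (ℓ'+1) := pow_le_pow_right₀ one_lt_gm.le (Nat.le_succ _)
        calc γ ^ (ℓ'+1+1) * y = γ ^ (ℓ'+1) * (γ * y) := by ring
        _ ≤ γ ^ ℓ' - 1 := this
        _ ≤ γ ^ (ℓ'+1) - 1 := by linarith
      · match ℓ', hT with
        | 0, hT =>
          simp only [Function.iterate_zero, id_eq] at hT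
          exfalso
          rw [not_lt] at h2
          nlinarith [gm_inv_pos]
        | (ℓ''+1), hT =>
          rw [Function.iterate_succ_apply] at hT
          have hT2 : greedyT (γ * y) = γ * (γ * y) - 1 := by
            unfold greedyT; rw [if_neg (by rwa [one_div])]
          rw [hT2] at hT
          rw [not_lt] at h2
          have hgg : γ * γ⁻¹ = 1 := mul_inv_cancel₀ gm_ne
          have hb0 : 0 ≤ γ * (γ * y) - 1 := by nlinarith [gm_pos]
          have hb1 : γ * (γ * y) - 1 < γ⁻¹ := by
            have : γ * (γ * y) < γ * (γ * γ⁻¹) := by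
              have := mul_lt_mul_of_pos_left (mul_lt_mul_of_pos_left hy1 gm_pos) gm_pos
              linarith
            rw [hgg, mul_one] at this
            rw [gm_inv]; linarith
          have := IH ℓ'' (by omega) _ hb0 hb1 hT
          have hfib := gm_pow_fib ℓ''
          calc γ ^ (ℓ''+1+1+1) * y = γ ^ (ℓ''+1) * (γ * (γ * y) - 1) + γ ^ (ℓ''+1) := by ring
          _ ≤ (γ ^ ℓ'' - 1) + γ ^ (ℓ''+1) := by linarith
          _ = γ ^ (ℓ''+1+1) - 1 := by rw [hfib]; ring

lemma gm_mul_inv : γ * γ⁻¹ = 1 := mul_inv_cancel₀ gm_ne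
lemma gm_inv_mul : γ⁻¹ * γ = 1 := inv_mul_cancel₀ gm_ne
lemma gm_inv_id : γ⁻¹ + γ⁻¹ * γ⁻¹ = 1 := by
  rw [gm_inv]; linear_combination gm_sq

/-- Lemma D: subtracting 1 from the value of a word with value ≥ 1 yields
the value of another word of the same length. -/
lemma sub_one_rep : ∀ m : ℕ, ∀ t : List (Fin 2), t.length = m → 1 ≤ wordVal t →
    ∃ s : List (Fin 2), s.length = t.length ∧ wordVal s = wordVal t - 1 := by
  intro m
  induction m using Nat.strong_induction_on with
  | _ m IH =>
  intro t hlen hv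
  match t with
  | [] => exfalso; rw [wordVal_nil] at hv; linarith
  | (c :: t') =>
    have hv' := wordVal_le t'
    have hvn' := wordVal_nonneg t'
    have hp : 0 < γ⁻¹ ^ t'.length := pow_pos gm_inv_pos _
    fin_cases c
    · -- leading digit 0: value < 1, contradiction
      exfalso
      rw [wordVal_cons] at hv
      norm_num at hv
      nlinarith [gm_inv_pos, gm_inv_mul, gm_pos]
    · -- leading digit 1
      match t' with
      | [] =>
        exfalso
        rw [wordVal_cons, wordVal_nil] at hv
        norm_num at hv
        nlinarith [gm_inv_lt_one, gm_inv_pos]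
      | (c' :: t'') =>
        have hvn'' := wordVal_nonneg t''
        fin_cases c'
        · -- 1 0 t'' : recurse
          rw [wordVal_cons, wordVal_cons] at hv
          norm_num at hv
          have hv'' : 1 ≤ wordVal t'' := by
            by_contra hcon
            push_neg at hcon
            nlinarith [gm_inv_id, mul_pos gm_inv_pos gm_inv_pos]
          obtain ⟨s'', hs1, hs2⟩ := IH t''.length (by simp at hlen; omega) t'' rfl hv''
          refine ⟨(0 : Fin 2) :: (0 : Fin 2) :: s'', by simp [hs1], ?_⟩
          rw [wordVal_cons, wordVal_cons, wordVal_cons, wordVal_cons, hs2]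
          norm_num
          linear_combination -gm_inv_id
        · -- 1 1 t''
          refine ⟨(0 : Fin 2) :: (0 : Fin 2) :: t'', by simp, ?_⟩
          rw [wordVal_cons, wordVal_cons, wordVal_cons, wordVal_cons]
          norm_num
          linear_combination -gm_inv_id

/-- Lemma E: the greedy expansion of the value of a word of length m dies by step m. -/
lemma greedy_finite : ∀ m : ℕ, ∀ t : List (Fin 2), t.length = m →
    greedyT^[m] (wordVal t) = 0 := by
  intro m
  induction m with
  | zero =>
    intro t hlen
    rw [List.length_eq_zero_iff] at hlen
    subst hlen; simp [wordVal_nil]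
  | succ m IH =>
    intro t hlen
    match t with
    | (c :: t') =>
    simp only [List.length_cons, Nat.succ.injEq] at hlen
    rw [Function.iterate_succ_apply]
    have hvn' := wordVal_nonneg t'
    have hu : wordVal (c :: t') = (c:ℝ) * γ⁻¹ + γ⁻¹ * wordVal t' := wordVal_cons c t'
    by_cases hcase : wordVal (c :: t') < 1 / γ
    · have hT : greedyT (wordVal (c :: t')) = γ * wordVal (c :: t') := by
        unfold greedyT; rw [if_pos hcase]
      rw [one_div] at hcase
      have hlt : γ * wordVal (c :: t') < 1 := by
        have := mul_lt_mul_of_pos_left hcase gm_pos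
        rwa [gm_mul_inv] at this
      have hTv : γ * wordVal (c :: t') = (c:ℝ) + wordVal t' := by
        rw [hu]; linear_combination ((c.val : ℝ) + wordVal t') * gm_mul_inv
      fin_cases c
      · rw [hT, hTv]
        norm_num
        exact IH t' hlen
      · exfalso
        rw [hTv] at hlt
        norm_num at hlt
        linarith
    · have hT : greedyT (wordVal (c :: t')) = γ * wordVal (c :: t') - 1 := by
        unfold greedyT; rw [if_neg hcase]
      rw [one_div, not_lt] at hcase
      have hTv : γ * wordVal (c :: t') = (c:ℝ) + wordVal t' := by
        rw [hu]; linear_combination ((c.val : ℝ) + wordVal t') * gm_mul_inv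
      fin_cases c
      · -- digit mismatch: need sub_one_rep
        have hge : 1 ≤ wordVal t' := by
          have := mul_le_mul_of_nonneg_left hcase gm_pos.le
          rw [gm_mul_inv] at this
          rw [hTv] at this
          norm_num at this
          linarith
        obtain ⟨s, hs1, hs2⟩ := sub_one_rep t'.length t' rfl hge
        rw [hT, hTv]
        norm_num
        rw [← hs2]
        exact IH s (hs1.trans hlen)
      · rw [hT, hTv]
        norm_num
        exact IH t' hlen

lemma key_lt {y r : ℝ} {ℓ : ℕ} (hy0 : 0 ≤ y) (hy : y < γ⁻¹)
    (hz : greedyT^[ℓ] y = 0) (hr0 : 0 ≤ r) (hr1 : r < γ⁻¹) :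
    y + γ⁻¹ ^ ℓ * r < γ⁻¹ := by
  have A := greedy_zero_bound ℓ y hy0 hy hz
  have hpow : γ ^ ℓ * γ⁻¹ ^ ℓ = 1 := by rw [← mul_pow, gm_mul_inv, one_pow]
  have hp1 : (0:ℝ) < γ ^ (ℓ+1) := pow_pos gm_pos _
  have h2 : γ ^ (ℓ+1) * γ⁻¹ = γ ^ ℓ := by rw [pow_succ, mul_assoc, gm_mul_inv, mul_one]
  have h3 : γ ^ (ℓ+1) * γ⁻¹ ^ ℓ = γ := by rw [pow_succ]; linear_combination γ * hpow
  have h4 : γ ^ (ℓ+1) * (γ⁻¹ ^ ℓ * r) = γ * r := by rw [← mul_assoc, h3]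
  have h5 : γ * r < 1 := by rw [← gm_mul_inv]; exact mul_lt_mul_of_pos_left hr1 gm_pos
  refine lt_of_mul_lt_mul_left ?_ hp1.le
  rw [mul_add, h4, h2]
  linarith

/-- Additivity of the greedy map along a finite word with a small remainder. -/
lemma greedy_add (t : List (Fin 2)) (r : ℝ) (hr0 : 0 ≤ r) (hr1 : r < γ⁻¹) :
    ∀ k, k ≤ t.length → greedyT^[k] (wordVal t + γ⁻¹ ^ t.length * r)
      = greedyT^[k] (wordVal t) + γ⁻¹ ^ (t.length - k) * r := by
  intro k
  induction k with
  | zero => intro _; simp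
  | succ k ih =>
    intro hk
    have hk' : k < t.length := hk
    have hy0 : 0 ≤ greedyT^[k] (wordVal t) := greedyT_iter_nonneg (wordVal_nonneg t) k
    have hz : greedyT^[t.length - k] (greedyT^[k] (wordVal t)) = 0 := by
      rw [← Function.iterate_add_apply, Nat.sub_add_cancel hk'.le]
      exact greedy_finite t.length t rfl
    rw [Function.iterate_succ_apply', Function.iterate_succ_apply', ih hk'.le]
    set y := greedyT^[k] (wordVal t) with hydef
    have hll : t.length - k = (t.length - (k+1)) + 1 := by omega
    have hpow : γ⁻¹ ^ (t.length - k) = γ⁻¹ * γ⁻¹ ^ (t.length - (k+1)) := by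
      rw [hll, pow_succ]; ring
    by_cases hc : y < γ⁻¹
    · have hlt : y + γ⁻¹ ^ (t.length - k) * r < γ⁻¹ := key_lt hy0 hc hz hr0 hr1
      have hT1 : greedyT (y + γ⁻¹ ^ (t.length - k) * r) = γ * (y + γ⁻¹ ^ (t.length - k) * r) := by
        unfold greedyT; rw [if_pos (by rwa [one_div])]
      have hT2 : greedyT y = γ * y := by
        unfold greedyT; rw [if_pos (by rwa [one_div])]
      rw [hT1, hT2, hpow]
      linear_combination (γ⁻¹ ^ (t.length - (k+1)) * r) * gm_mul_inv
    · push_neg at hc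
      have hge : γ⁻¹ ≤ y + γ⁻¹ ^ (t.length - k) * r := by
        have : 0 ≤ γ⁻¹ ^ (t.length - k) * r := mul_nonneg (pow_nonneg gm_inv_pos.le _) hr0
        linarith
      have hT1 : greedyT (y + γ⁻¹ ^ (t.length - k) * r)
          = γ * (y + γ⁻¹ ^ (t.length - k) * r) - 1 := by
        unfold greedyT; rw [if_neg (by rw [one_div, not_lt]; exact hge)]
      have hT2 : greedyT y = γ * y - 1 := by
        unfold greedyT; rw [if_neg (by rw [one_div, not_lt]; exact hc)]
      rw [hT1, hT2, hpow]
      linear_combination (γ⁻¹ ^ (t.length - (k+1)) * r) * gm_mul_inv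

/-- Digits agree along the word. -/
lemma greedy_add_digit (t : List (Fin 2)) (r : ℝ) (hr0 : 0 ≤ r) (hr1 : r < γ⁻¹)
    (k : ℕ) (hk : k < t.length) :
    greedyDigit2 (wordVal t + γ⁻¹ ^ t.length * r) k = greedyDigit2 (wordVal t) k := by
  unfold greedyDigit2
  rw [greedy_add t r hr0 hr1 k hk.le]
  have hy0 : 0 ≤ greedyT^[k] (wordVal t) := greedyT_iter_nonneg (wordVal_nonneg t) k
  have hz : greedyT^[t.length - k] (greedyT^[k] (wordVal t)) = 0 := by
    rw [← Function.iterate_add_apply, Nat.sub_add_cancel hk.le]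
    exact greedy_finite t.length t rfl
  set y := greedyT^[k] (wordVal t)
  by_cases hc : y < γ⁻¹
  · have hlt : y + γ⁻¹ ^ (t.length - k) * r < γ⁻¹ := key_lt hy0 hc hz hr0 hr1
    rw [if_neg (by rw [one_div, not_le]; exact hlt), if_neg (by rw [one_div, not_le]; exact hc)]
  · push_neg at hc
    have : 0 ≤ γ⁻¹ ^ (t.length - k) * r := mul_nonneg (pow_nonneg gm_inv_pos.le _) hr0
    rw [if_pos (by rw [one_div]; linarith), if_pos (by rw [one_div]; exact hc)]

/-- Endpoint: after the word, the remainder is restored. -/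
lemma greedy_add_end (t : List (Fin 2)) (r : ℝ) (hr0 : 0 ≤ r) (hr1 : r < γ⁻¹) :
    greedyT^[t.length] (wordVal t + γ⁻¹ ^ t.length * r) = r := by
  rw [greedy_add t r hr0 hr1 t.length le_rfl, greedy_finite t.length t rfl]
  simp

section Blocks
variable (w : ℕ → List (Fin 2))

lemma partialLen_zero : partialLen w 0 = 0 := Finset.sum_range_zero _

lemma partialLen_succ (i : ℕ) : partialLen w (i+1) = partialLen w i + (w i).length :=
  Finset.sum_range_succ _ i

lemma partialLen_mono {i j : ℕ} (h : i ≤ j) : partialLen w i ≤ partialLen w j :=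
  Finset.sum_le_sum_of_subset (Finset.range_subset_range.2 h)

lemma le_partialLen (hne : ∀ i, 1 ≤ (w i).length) (i : ℕ) : i ≤ partialLen w i := by
  induction i with
  | zero => simp
  | succ i ih => rw [partialLen_succ]; have := hne i; omega

lemma blockIndex_spec (hne : ∀ i, 1 ≤ (w i).length) (n : ℕ) :
    partialLen w (blockIndex w n) ≤ n ∧ n < partialLen w (blockIndex w n + 1) := by
  constructor
  · exact Nat.findGreatest_spec (P := fun i => partialLen w i ≤ n) (m := 0) (Nat.zero_le n)
      (show partialLen w 0 ≤ n by rw [partialLen_zero]; exact Nat.zero_le n)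
  · by_contra h
    push_neg at h
    have h1 : blockIndex w n + 1 ≤ n := le_trans (le_partialLen w hne _) h
    have h2 : blockIndex w n + 1 ≤ blockIndex w n :=
      Nat.le_findGreatest (P := fun i => partialLen w i ≤ n) h1 h
    omega

lemma blockIndex_eq (hne : ∀ i, 1 ≤ (w i).length) {n i : ℕ}
    (h1 : partialLen w i ≤ n) (h2 : n < partialLen w (i+1)) : blockIndex w n = i := by
  obtain ⟨hb1, hb2⟩ := blockIndex_spec w hne n
  rcases lt_trichotomy (blockIndex w n) i with hlt | he | hgt
  · exfalso
    have := le_trans (partialLen_mono w (by omega : blockIndex w n + 1 ≤ i)) h1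
    omega
  · exact he
  · exfalso
    have := le_trans (partialLen_mono w (by omega : i + 1 ≤ blockIndex w n)) hb1
    omega

lemma concatWords_apply (hne : ∀ i, 1 ≤ (w i).length) (i j : ℕ) (hj : j < (w i).length) :
    concatWords w (partialLen w i + j) = (w i).getD j 0 := by
  have hb : blockIndex w (partialLen w i + j) = i := by
    refine blockIndex_eq w hne (by omega) ?_
    rw [partialLen_succ]; omega
  unfold concatWords
  rw [hb]
  congr 1
  omega

end Blocks

lemma projPi_eq (a : ℕ → Fin 2) : projPi a = ∑' n : ℕ, (a n : ℝ) * γ⁻¹ ^ (n+1) :=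
  tsum_congr fun n => by rw [gm_zpow]

lemma summable_proj' (a : ℕ → Fin 2) : Summable (fun n : ℕ => (a n : ℝ) * γ⁻¹ ^ (n+1)) := by
  have := summable_proj a
  refine this.congr fun n => by rw [gm_zpow]

lemma projPi_nonneg (a : ℕ → Fin 2) : 0 ≤ projPi a := by
  rw [projPi_eq]
  exact tsum_nonneg fun n => mul_nonneg (fin2_nonneg _) (pow_nonneg gm_inv_pos.le _)

lemma geom_sum_gm : ∑' n : ℕ, γ⁻¹ ^ (n+1) = γ := by
  have h1 : ∑' n : ℕ, γ⁻¹ ^ (n+1) = γ⁻¹ * ∑' n : ℕ, γ⁻¹ ^ n := by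
    rw [← tsum_mul_left]
    exact tsum_congr fun n => by rw [pow_succ']
  rw [h1, tsum_geometric_of_lt_one gm_inv_pos.le gm_inv_lt_one]
  have h2 : 1 - γ⁻¹ = 2 - γ := by rw [gm_inv]; ring
  rw [h2]
  have h4 : ((2 - γ) * γ) * γ = 1 := by linear_combination (1 - γ) * gm_sq
  have h5 : ((2 - γ) * γ)⁻¹ = γ := inv_eq_of_mul_eq_one_right h4
  calc γ⁻¹ * (2 - γ)⁻¹ = ((2 - γ) * γ)⁻¹ := by rw [mul_inv]; ring
  _ = γ := h5

lemma summable_geom' : Summable (fun n : ℕ => γ⁻¹ ^ (n+1)) := by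
  have : Summable (fun n : ℕ => γ⁻¹ * γ⁻¹ ^ n) :=
    (summable_geometric_of_lt_one gm_inv_pos.le gm_inv_lt_one).mul_left _
  exact this.congr fun n => by rw [pow_succ']

lemma projPi_le (a : ℕ → Fin 2) : projPi a ≤ γ := by
  rw [projPi_eq]
  have hle : ∑' n : ℕ, ((a n : ℝ) * γ⁻¹ ^ (n+1)) ≤ ∑' n : ℕ, γ⁻¹ ^ (n+1) := by
    refine Summable.tsum_le_tsum (fun n => ?_) (summable_proj' a) summable_geom'
    have := pow_nonneg gm_inv_pos.le (n+1)
    nlinarith [fin2_le (a n), fin2_nonneg (a n)]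
  exact hle.trans_eq geom_sum_gm

/-- Decomposition of the projection of a concatenation. -/
lemma proj_decomp (w : ℕ → List (Fin 2)) (hne : ∀ i, 1 ≤ (w i).length) :
    projPi (concatWords w) = wordVal (w 0)
      + γ⁻¹ ^ (w 0).length * projPi (concatWords (fun i => w (i+1))) := by
  set m₀ := (w 0).length with hm₀
  set c := concatWords w
  set w' : ℕ → List (Fin 2) := fun i => w (i+1) with hw'
  set c' := concatWords w'
  have hA : ∀ n < m₀, c n = (w 0).getD n 0 := by
    intro n hn
    have := concatWords_apply w hne 0 n hn
    rwa [partialLen_zero, zero_add] at this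
  have hpl : ∀ i, partialLen w (i+1) = m₀ + partialLen w' i := by
    intro i
    unfold partialLen
    rw [Finset.sum_range_succ']
    rw [add_comm]
  have hB : ∀ j, c (m₀ + j) = c' j := by
    intro j
    have hne' : ∀ i, 1 ≤ (w' i).length := fun i => hne (i+1)
    obtain ⟨hb1, hb2⟩ := blockIndex_spec w' hne' j
    set i' := blockIndex w' j
    have hbi : blockIndex w (m₀ + j) = i' + 1 := by
      refine blockIndex_eq w hne ?_ ?_
      · rw [hpl]; omega
      · rw [hpl]; omega
    show concatWords w (m₀ + j) = concatWords w' j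
    unfold concatWords
    rw [hbi]
    have : m₀ + j - partialLen w (i' + 1) = j - partialLen w' i' := by
      rw [hpl]; omega
    rw [this]
  have hsum := summable_proj' c
  rw [projPi_eq, ← Summable.sum_add_tsum_nat_add m₀ hsum]
  congr 1
  · rw [wordVal_eq, ← hm₀]
    exact Finset.sum_congr rfl fun i hi => by
      rw [hA i (Finset.mem_range.1 hi)]
  · rw [projPi_eq, ← tsum_mul_left]
    exact tsum_congr fun j => by
      rw [add_comm j m₀, hB j, pow_add, pow_add]
      ring

lemma take2_cons {l : List (Fin 2)} (h : l.take 2 = [0, 0]) :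
    ∃ t, l = (0 : Fin 2) :: (0 : Fin 2) :: t := by
  match l with
  | [] => simp at h
  | [a] => simp at h
  | a :: b :: t =>
    simp [List.take] at h
    exact ⟨t, by rw [h.1, h.2]⟩

lemma wordVal_00 (t : List (Fin 2)) :
    wordVal ((0 : Fin 2) :: (0 : Fin 2) :: t) = γ⁻¹ * (γ⁻¹ * wordVal t) := by
  rw [wordVal_cons, wordVal_cons]; norm_num

lemma word00_le {l : List (Fin 2)} (h : l.take 2 = [0, 0]) :
    wordVal l ≤ γ⁻¹ - γ⁻¹ ^ (l.length - 1) := by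
  obtain ⟨t, rfl⟩ := take2_cons h
  rw [wordVal_00]
  have hb := wordVal_le t
  have hlen : ((0:Fin 2) :: (0:Fin 2) :: t).length - 1 = t.length + 1 := by simp
  rw [hlen]
  have key : γ⁻¹ * (γ⁻¹ * (γ - γ * γ⁻¹ ^ t.length)) = γ⁻¹ - γ⁻¹ ^ (t.length + 1) := by
    rw [pow_succ]
    linear_combination (γ⁻¹ - γ⁻¹ * γ⁻¹ ^ t.length) * gm_inv_mul
  rw [← key]
  have h1 : γ⁻¹ * (γ - γ * γ⁻¹ ^ t.length) ≥ γ⁻¹ * wordVal t :=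
    mul_le_mul_of_nonneg_left hb gm_inv_pos.le
  exact mul_le_mul_of_nonneg_left (mul_le_mul_of_nonneg_left hb gm_inv_pos.le) gm_inv_pos.le

lemma take2_len {l : List (Fin 2)} (h : l.take 2 = [0, 0]) : 2 ≤ l.length := by
  obtain ⟨t, rfl⟩ := take2_cons h
  simp

/-- The tail value is strictly below 1/γ when the first two blocks start with 00. -/
lemma tail_lt (v : ℕ → List (Fin 2)) (hne : ∀ i, 1 ≤ (v i).length)
    (h0 : (v 0).take 2 = [0, 0]) (h1 : (v 1).take 2 = [0, 0]) :
    projPi (concatWords v) < γ⁻¹ := by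
  have hd1 := proj_decomp v hne
  set v' : ℕ → List (Fin 2) := fun i => v (i+1) with hv'
  have hne' : ∀ i, 1 ≤ (v' i).length := fun i => hne (i+1)
  have hd2 := proj_decomp v' hne'
  have h1' : (v' 0).take 2 = [0, 0] := h1
  have hL : 2 ≤ (v 0).length := take2_len h0
  have hL' : 2 ≤ (v' 0).length := take2_len h1'
  have hw0 := word00_le h0
  have hw1 := word00_le h1'
  set L := (v 0).length
  set L' := (v' 0).length
  set x2 := projPi (concatWords (fun i => v' (i+1)))
  have hx2 : x2 ≤ γ := projPi_le _
  have hp : γ⁻¹ ^ L' * γ = γ⁻¹ ^ (L'-1) := by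
    have h5 : γ⁻¹ ^ ((L'-1)+1) = γ⁻¹ ^ L' := by congr 1; omega
    calc γ⁻¹ ^ L' * γ = γ⁻¹ ^ ((L'-1)+1) * γ := by rw [h5]
    _ = γ⁻¹ ^ (L'-1) := by rw [pow_succ, mul_assoc, gm_inv_mul, mul_one]
  have hinner : wordVal (v' 0) + γ⁻¹ ^ L' * x2 ≤ γ⁻¹ := by
    have h2 : γ⁻¹ ^ L' * x2 ≤ γ⁻¹ ^ L' * γ :=
      mul_le_mul_of_nonneg_left hx2 (pow_nonneg gm_inv_pos.le _)
    rw [hp] at h2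
    linarith
  have houter : γ⁻¹ ^ L * (wordVal (v' 0) + γ⁻¹ ^ L' * x2) ≤ γ⁻¹ ^ L * γ⁻¹ :=
    mul_le_mul_of_nonneg_left hinner (pow_nonneg gm_inv_pos.le _)
  have hq : γ⁻¹ ^ L * γ⁻¹ = γ⁻¹ ^ (L+1) := by rw [pow_succ]
  have hstrict : γ⁻¹ ^ (L+1) < γ⁻¹ ^ (L-1) :=
    pow_lt_pow_right_of_lt_one₀ gm_inv_pos gm_inv_lt_one (by omega)
  rw [hd1, ← hv'] at *
  rw [hd2]
  calc wordVal (v 0) + γ⁻¹ ^ L * (wordVal (v' 0) + γ⁻¹ ^ L' * x2)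
      ≤ (γ⁻¹ - γ⁻¹ ^ (L-1)) + γ⁻¹ ^ (L+1) := by rw [← hq]; linarith
  _ < γ⁻¹ := by linarith

lemma greedyDigit2_shift (x : ℝ) (k j : ℕ) :
    greedyDigit2 x (k + j) = greedyDigit2 (greedyT^[k] x) j := by
  unfold greedyDigit2
  rw [add_comm, Function.iterate_add_apply]

lemma normalizeWord_getD (l : List (Fin 2)) (j : ℕ) (hj : j < l.length) :
    (normalizeWord l).getD j 0 = greedyDigit2 (wordVal l) j := by
  unfold normalizeWord
  rw [List.getD_eq_getElem _ _ (by simpa using hj)]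
  simp

/-- The greedy orbit of the concatenation restarts at each block boundary. -/
lemma block_iter (w : ℕ → List (Fin 2)) (hne : ∀ i, 1 ≤ (w i).length)
    (h00 : ∀ i, 1 ≤ i → (w i).take 2 = [0, 0]) :
    ∀ i, greedyT^[partialLen w i] (projPi (concatWords w))
      = projPi (concatWords (fun j => w (i + j))) := by
  intro i
  induction i with
  | zero =>
    have h : (fun j => w (0 + j)) = w := funext fun j => by rw [Nat.zero_add]
    rw [partialLen_zero, h]
    simp
  | succ i ih =>
    rw [partialLen_succ, add_comm, Function.iterate_add_apply, ih]
    set v : ℕ → List (Fin 2) := fun j => w (i + j) with hv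
    have hnev : ∀ j, 1 ≤ (v j).length := fun j => hne (i + j)
    have hshift : (fun j => v (j + 1)) = (fun j => w ((i+1) + j)) :=
      funext fun j => congrArg w (by omega)
    have hd := proj_decomp v hnev
    rw [hshift] at hd
    set r := projPi (concatWords (fun j => w ((i+1) + j))) with hr
    have hr0 : 0 ≤ r := projPi_nonneg _
    have hr1 : r < γ⁻¹ := by
      have h2 : (fun j => w ((i+1) + j) : ℕ → List (Fin 2)) 0 = w (i+1) := congrArg w (by omega)
      have h3 : (fun j => w ((i+1) + j) : ℕ → List (Fin 2)) 1 = w (i+2) := congrArg w (by omega)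
      refine tail_lt _ (fun j => hne _) (h00 _ (by omega)) (h00 _ (by omega))
    have hv0 : v 0 = w i := rfl
    rw [hd, hv0]
    exact greedy_add_end (w i) r hr0 hr1

/-- Sidorov–Vershik blocking property: if each word `wᵢ`, `i ≥ 2`, begins with `00`,
then normalization of the concatenation can be performed blockwise. -/
theorem normalize_concat_blockwise (w : ℕ → List (Fin 2)) (a : ℕ → Fin 2)
    (hne : ∀ i, 1 ≤ (w i).length)
    (h00 : ∀ i, 1 ≤ i → (w i).take 2 = [0, 0])
    (ha : a = concatWords w) :
    normalizeSeq a = concatWords (fun i => normalizeWord (w i)) := by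
  subst ha
  funext n
  obtain ⟨hb1, hb2⟩ := blockIndex_spec w hne n
  set i := blockIndex w n with hi
  set j := n - partialLen w i with hjdef
  have hjlt : j < (w i).length := by
    rw [partialLen_succ] at hb2; omega
  have hn : n = partialLen w i + j := by omega
  -- left side
  have hx := block_iter w hne h00 i
  set v : ℕ → List (Fin 2) := fun k => w (i + k) with hv
  have hnev : ∀ k, 1 ≤ (v k).length := fun k => hne (i + k)
  have hshift : (fun k => v (k + 1)) = (fun k => w ((i+1) + k)) :=
    funext fun k => congrArg w (by omega)
  have hd := proj_decomp v hnev
  rw [hshift] at hd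
  set r := projPi (concatWords (fun k => w ((i+1) + k))) with hr
  have hr0 : 0 ≤ r := projPi_nonneg _
  have hr1 : r < γ⁻¹ := by
    have h2 : (fun k => w ((i+1) + k) : ℕ → List (Fin 2)) 0 = w (i+1) := congrArg w (by omega)
    have h3 : (fun k => w ((i+1) + k) : ℕ → List (Fin 2)) 1 = w (i+2) := congrArg w (by omega)
    refine tail_lt _ (fun k => hne _) (h00 _ (by omega)) (h00 _ (by omega))
  have hv0 : v 0 = w i := rfl
  have hL : normalizeSeq (concatWords w) n = greedyDigit2 (wordVal (w i)) j := by
    show greedyDigit2 (projPi (concatWords w)) n = _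
    rw [hn, greedyDigit2_shift, hx, hd, hv0]
    exact greedy_add_digit (w i) r hr0 hr1 j hjlt
  -- right side
  set W' : ℕ → List (Fin 2) := fun k => normalizeWord (w k) with hW'
  have hlen' : ∀ k, (W' k).length = (w k).length := fun k => by
    simp [hW', normalizeWord]
  have hpl' : ∀ k, partialLen W' k = partialLen w k := fun k =>
    Finset.sum_congr rfl fun m _ => hlen' m
  have hbi : blockIndex W' n = i := by
    refine blockIndex_eq W' (fun k => by rw [hlen']; exact hne k) ?_ ?_
    · rw [hpl']; exact hb1
    · rw [hpl']; exact hb2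
  have hR : concatWords W' n = greedyDigit2 (wordVal (w i)) j := by
    unfold concatWords
    rw [hbi, hpl']
    exact normalizeWord_getD (w i) j hjlt
  rw [hL, hR]
end
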